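/- The function p ↦ π_p² c_p is convex on (1,2), where π_p = 2π/(p sin(π/p)) and c_p = (p-1)^{(p-1)/p}(2-p)^{(2-p)/p}; consequently there is a unique p₀ ∈ (4/3, 3/2) with π_{p₀}² c_{p₀} = π³/(π²-8), and π_p² c_p < π³/(π²-8) for all p ∈ (p₀, 2). -/

import Mathlib

open Real Set

noncomputable def pipc (p : ℝ) : ℝ := 2 * π / (p * Real.sin (π / p))

noncomputable def cp (p : ℝ) : ℝ := (p - 1) ^ ((p - 1) / p) * (2 - p) ^ ((2 - p) / p)

open Filter Topology

-- generic helper: convexity on open interval from explicit first/second derivatives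
lemma convexOn_Ioo_of_deriv2 {f f' f'' : ℝ → ℝ} {a b : ℝ}
    (h1 : ∀ x ∈ Ioo a b, HasDerivAt f (f' x) x)
    (h2 : ∀ x ∈ Ioo a b, HasDerivAt f' (f'' x) x)
    (h3 : ∀ x ∈ Ioo a b, 0 ≤ f'' x) : ConvexOn ℝ (Ioo a b) f := by
  have hO : IsOpen (Ioo a b) := isOpen_Ioo
  have hint : interior (Ioo a b) = Ioo a b := hO.interior_eq
  have heq : ∀ x ∈ Ioo a b, deriv f =ᶠ[𝓝 x] f' := by
    intro x hx
    filter_upwards [hO.mem_nhds hx] with y hy using (h1 y hy).deriv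
  apply convexOn_of_deriv2_nonneg (convex_Ioo a b)
  · exact fun x hx => (h1 x hx).continuousAt.continuousWithinAt
  · rw [hint]; exact fun x hx => (h1 x hx).differentiableAt.differentiableWithinAt
  · rw [hint]; intro x hx
    exact ((h2 x hx).differentiableAt.congr_of_eventuallyEq (heq x hx)).differentiableWithinAt
  · rw [hint]; intro x hx
    have : deriv^[2] f x = deriv (deriv f) x := rfl
    rw [this, (heq x hx).deriv_eq, (h2 x hx).deriv]
    exact h3 x hx

lemma ConvexOn.congr'' {s : Set ℝ} {f g : ℝ → ℝ} (hf : ConvexOn ℝ s f) (h : EqOn g f s) :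
    ConvexOn ℝ s g :=
  ⟨hf.1, fun x hx y hy a b ha hb hab => by
    rw [h hx, h hy, h (hf.1 hx hy ha hb hab)]; exact hf.2 hx hy ha hb hab⟩

lemma convexOn_exp_comp {s : Set ℝ} {g : ℝ → ℝ} (hg : ConvexOn ℝ s g) :
    ConvexOn ℝ s (fun x => Real.exp (g x)) := by
  refine ⟨hg.1, fun x hx y hy a b ha hb hab => ?_⟩
  simp only [smul_eq_mul]
  calc Real.exp (g (a*x+b*y)) ≤ Real.exp (a * g x + b * g y) := by
        apply Real.exp_le_exp.2; simpa using hg.2 hx hy ha hb hab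
    _ ≤ a * Real.exp (g x) + b * Real.exp (g y) := by
        simpa using convexOn_exp.2 (mem_univ (g x)) (mem_univ (g y)) ha hb hab

-- basic facts on Ioo 1 2
lemma sin_pos_of_mem {p : ℝ} (hp : p ∈ Ioo (1:ℝ) 2) : 0 < Real.sin (π / p) := by
  obtain ⟨h1, h2⟩ := hp
  have hp0 : 0 < p := by linarith
  apply Real.sin_pos_of_pos_of_lt_pi
  · positivity
  · rw [div_lt_iff₀ hp0]; nlinarith [Real.pi_pos]

lemma cos_nonpos_of_mem {p : ℝ} (hp : p ∈ Ioo (1:ℝ) 2) : Real.cos (π / p) ≤ 0 := by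
  obtain ⟨h1, h2⟩ := hp
  have hp0 : 0 < p := by linarith
  apply Real.cos_nonpos_of_pi_div_two_le_of_le
  · rw [le_div_iff₀ hp0]; nlinarith [Real.pi_pos]
  · rw [div_le_iff₀ hp0]; nlinarith [Real.pi_pos]

-- Piece B : -2 log p
lemma convexB : ConvexOn ℝ (Ioo (1:ℝ) 2) (fun p => -2 * Real.log p) := by
  apply convexOn_Ioo_of_deriv2 (f' := fun p => -2 * p⁻¹) (f'' := fun p => 2 / p^2)
  · intro x hx
    have hx0 : x ≠ 0 := by have := hx.1; intro h; rw [h] at this; linarith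
    simpa using (Real.hasDerivAt_log hx0).const_mul (-2)
  · intro x hx
    have hx0 : x ≠ 0 := by have := hx.1; intro h; rw [h] at this; linarith
    have := (hasDerivAt_inv hx0).const_mul (-2)
    refine this.congr_deriv (Eq.symm ?_)
    field_simp
  · intro x hx; have := hx.1; positivity

lemma hasDerivAt_pi_div {x : ℝ} (hx0 : x ≠ 0) :
    HasDerivAt (fun y : ℝ => π / y) (π * -(x^2)⁻¹) x := by
  simpa [div_eq_mul_inv] using (hasDerivAt_inv hx0).const_mul π

-- Piece C : -2 log (sin (π/p))
lemma convexC : ConvexOn ℝ (Ioo (1:ℝ) 2) (fun p => -2 * Real.log (Real.sin (π / p))) := by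
  apply convexOn_Ioo_of_deriv2
    (f' := fun p => 2*π*(Real.cos (π/p)/Real.sin (π/p) * (p^2)⁻¹))
    (f'' := fun p => 2*π*((π/p^2)/(Real.sin (π/p))^2 * (p^2)⁻¹
        + (Real.cos (π/p)/Real.sin (π/p)) * (-(2*p)/(p^2)^2)))
  · intro x hx
    have hx0 : x ≠ 0 := by have := hx.1; intro h; rw [h] at this; linarith
    have hs : 0 < Real.sin (π/x) := sin_pos_of_mem hx
    have hsin : HasDerivAt (fun y : ℝ => Real.sin (π/y))
        (Real.cos (π/x) * (π * -(x^2)⁻¹)) x :=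
      (Real.hasDerivAt_sin (π/x)).comp x (hasDerivAt_pi_div hx0)
    have hlog : HasDerivAt (fun y : ℝ => Real.log (Real.sin (π/y)))
        ((Real.sin (π/x))⁻¹ * (Real.cos (π/x) * (π * -(x^2)⁻¹))) x :=
      by have := (Real.hasDerivAt_log hs.ne').comp x hsin; exact this
    have h2 := hlog.const_mul (-2)
    refine h2.congr_deriv (Eq.symm ?_)
    field_simp
  · intro x hx
    have hx0 : x ≠ 0 := by have := hx.1; intro h; rw [h] at this; linarith
    have hs : 0 < Real.sin (π/x) := sin_pos_of_mem hx
    have hsin : HasDerivAt (fun y : ℝ => Real.sin (π/y))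
        (Real.cos (π/x) * (π * -(x^2)⁻¹)) x :=
      (Real.hasDerivAt_sin (π/x)).comp x (hasDerivAt_pi_div hx0)
    have hcos : HasDerivAt (fun y : ℝ => Real.cos (π/y))
        (-Real.sin (π/x) * (π * -(x^2)⁻¹)) x :=
      (Real.hasDerivAt_cos (π/x)).comp x (hasDerivAt_pi_div hx0)
    have hA : HasDerivAt (fun y : ℝ => Real.cos (π/y)/Real.sin (π/y))
        ((π/x^2) / (Real.sin (π/x))^2) x := by
      have hd := hcos.div hsin hs.ne'
      refine hd.congr_deriv (Eq.symm ?_)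
      have pyth := Real.sin_sq_add_cos_sq (π/x)
      field_simp
      linear_combination (-1) * pyth
    have hB2 : HasDerivAt (fun y : ℝ => ((y:ℝ)^2)⁻¹) (-(2*x)/(x^2)^2) x := by
      have hd := (hasDerivAt_pow 2 x).inv (pow_ne_zero 2 hx0)
      refine hd.congr_deriv (Eq.symm ?_)
      ring
    exact (hA.mul hB2).const_mul (2*π)
  · intro x hx
    have hx0 : 0 < x := by have := hx.1; linarith
    have hs : 0 < Real.sin (π/x) := sin_pos_of_mem hx
    have hc : Real.cos (π/x) ≤ 0 := cos_nonpos_of_mem hx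
    have hpi := Real.pi_pos
    have t1 : 0 ≤ (π/x^2)/(Real.sin (π/x))^2 * (x^2)⁻¹ := by positivity
    have t2 : 0 ≤ (Real.cos (π/x)/Real.sin (π/x)) * (-(2*x)/(x^2)^2) := by
      have h1 : Real.cos (π/x)/Real.sin (π/x) ≤ 0 := div_nonpos_iff.2 (Or.inr ⟨hc, hs.le⟩)
      have h2 : -(2*x)/(x^2)^2 ≤ 0 := div_nonpos_iff.2 (Or.inr ⟨by linarith, by positivity⟩)
      nlinarith [mul_nonneg (neg_nonneg.2 h1) (neg_nonneg.2 h2)]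
    apply mul_nonneg (by positivity) (by linarith)

-- Piece H : ((p-1)/p) log(p-1) + ((2-p)/p) log(2-p)
lemma convexH : ConvexOn ℝ (Ioo (1:ℝ) 2)
    (fun p => (p-1)/p * Real.log (p-1) + (2-p)/p * Real.log (2-p)) := by
  apply convexOn_Ioo_of_deriv2
    (f' := fun p => (Real.log (p-1) - 2 * Real.log (2-p)) / p^2)
    (f'' := fun p => (-2*(Real.log (p-1) - 2*Real.log (2-p))
        + p * ((p-1)⁻¹ + 2 * (2-p)⁻¹)) / p^3)
  · intro x hx
    obtain ⟨h1, h2⟩ := hx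
    have hx0 : x ≠ 0 := by intro h; rw [h] at h1; linarith
    have ha : x - 1 ≠ 0 := by intro h; nlinarith
    have hb : 2 - x ≠ 0 := by intro h; nlinarith
    have d1 : HasDerivAt (fun y : ℝ => y - 1) 1 x := by
      simpa using (hasDerivAt_id x).sub_const 1
    have d2 : HasDerivAt (fun y : ℝ => 2 - y) (-1) x := by
      simpa using (hasDerivAt_id x).const_sub 2
    have dl1 : HasDerivAt (fun y : ℝ => Real.log (y-1)) ((x-1)⁻¹ * 1) x :=
      by have := (Real.hasDerivAt_log ha).comp x d1; exact this
    have dl2 : HasDerivAt (fun y : ℝ => Real.log (2-y)) ((2-x)⁻¹ * (-1)) x :=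
      by have := (Real.hasDerivAt_log hb).comp x d2; exact this
    have dq1 : HasDerivAt (fun y : ℝ => (y-1)/y) ((1 * x - (x-1) * 1)/x^2) x :=
      d1.div (hasDerivAt_id x) hx0
    have dq2 : HasDerivAt (fun y : ℝ => (2-y)/y) (((-1) * x - (2-x) * 1)/x^2) x :=
      d2.div (hasDerivAt_id x) hx0
    have := (dq1.mul dl1).add (dq2.mul dl2)
    refine this.congr_deriv (Eq.symm ?_)
    field_simp
    ring
  · intro x hx
    obtain ⟨h1, h2⟩ := hx
    have hx0 : x ≠ 0 := by intro h; rw [h] at h1; linarith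
    have ha : x - 1 ≠ 0 := by intro h; nlinarith
    have hb : 2 - x ≠ 0 := by intro h; nlinarith
    have d1 : HasDerivAt (fun y : ℝ => y - 1) 1 x := by
      simpa using (hasDerivAt_id x).sub_const 1
    have d2 : HasDerivAt (fun y : ℝ => 2 - y) (-1) x := by
      simpa using (hasDerivAt_id x).const_sub 2
    have dl1 : HasDerivAt (fun y : ℝ => Real.log (y-1)) ((x-1)⁻¹ * 1) x :=
      by have := (Real.hasDerivAt_log ha).comp x d1; exact this
    have dl2 : HasDerivAt (fun y : ℝ => Real.log (2-y)) ((2-x)⁻¹ * (-1)) x :=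
      by have := (Real.hasDerivAt_log hb).comp x d2; exact this
    have dnum : HasDerivAt (fun y : ℝ => Real.log (y-1) - 2 * Real.log (2-y))
        ((x-1)⁻¹ * 1 - 2 * ((2-x)⁻¹ * (-1))) x := dl1.sub (dl2.const_mul 2)
    have dden : HasDerivAt (fun y : ℝ => (y:ℝ)^2) (2 * x^(2-1)) x := by
      simpa using hasDerivAt_pow 2 x
    have := dnum.div dden (pow_ne_zero 2 hx0)
    refine this.congr_deriv (Eq.symm ?_)
    field_simp
    ring
  · intro x hx
    obtain ⟨h1, h2⟩ := hx
    have ha : (0:ℝ) < x - 1 := by linarith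
    have hb : (0:ℝ) < 2 - x := by linarith
    have hl1 : Real.log (x-1) ≤ 0 := Real.log_nonpos (by linarith) (by linarith)
    have hl2 : 1 - (2-x)⁻¹ ≤ Real.log (2-x) := Real.one_sub_inv_le_log_of_pos hb
    apply div_nonneg _ (by positivity)
    have key : 0 ≤ 4 - 4*(2-x)⁻¹ + x * ((x-1)⁻¹ + 2 * (2-x)⁻¹) := by
      have hid : 4 - 4*(2-x)⁻¹ + x * ((x-1)⁻¹ + 2 * (2-x)⁻¹)
          = ((3*x-2)*(2-x)) / ((x-1)*(2-x)) := by
        field_simp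
        ring
      rw [hid]
      apply div_nonneg (by nlinarith) (by nlinarith)
    nlinarith [hl1, hl2]

lemma pipc_pos {p : ℝ} (hp : p ∈ Ioo (1:ℝ) 2) : 0 < pipc p := by
  have hs := sin_pos_of_mem hp
  have hp0 : 0 < p := by have := hp.1; linarith
  have := Real.pi_pos
  unfold pipc; positivity

lemma cp_pos {p : ℝ} (hp : p ∈ Ioo (1:ℝ) 2) : 0 < cp p := by
  obtain ⟨h1, h2⟩ := hp
  have ha : (0:ℝ) < p - 1 := by linarith
  have hb : (0:ℝ) < 2 - p := by linarith
  unfold cp; positivity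

lemma F_eq {p : ℝ} (hp : p ∈ Ioo (1:ℝ) 2) :
    pipc p ^ 2 * cp p = Real.exp ((Real.log (4*π^2)
      + ((-2*Real.log p) + (-2*Real.log (Real.sin (π/p)))))
      + ((p-1)/p*Real.log (p-1) + (2-p)/p*Real.log (2-p))) := by
  obtain ⟨h1, h2⟩ := hp
  have hs : 0 < Real.sin (π/p) := sin_pos_of_mem ⟨h1, h2⟩
  have hp0 : 0 < p := by linarith
  have ha : (0:ℝ) < p - 1 := by linarith
  have hb : (0:ℝ) < 2 - p := by linarith
  have hpi := Real.pi_pos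
  have hpipc := pipc_pos ⟨h1, h2⟩
  have hcp := cp_pos ⟨h1, h2⟩
  rw [← Real.exp_log (show (0:ℝ) < pipc p^2 * cp p by positivity)]
  congr 1
  rw [Real.log_mul (pow_ne_zero 2 hpipc.ne') hcp.ne', Real.log_pow,
    show pipc p = 2*π/(p*Real.sin (π/p)) from rfl,
    Real.log_div (by positivity) (by positivity),
    Real.log_mul two_ne_zero Real.pi_pos.ne',
    Real.log_mul hp0.ne' hs.ne',
    show cp p = (p-1)^((p-1)/p) * (2-p)^((2-p)/p) from rfl,
    Real.log_mul (by positivity) (by positivity),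
    Real.log_rpow ha, Real.log_rpow hb,
    show (4:ℝ)*π^2 = (2*π)^2 by ring, Real.log_pow,
    Real.log_mul two_ne_zero Real.pi_pos.ne']
  push_cast
  ring

lemma convexF : ConvexOn ℝ (Ioo (1:ℝ) 2) (fun p => pipc p ^ 2 * cp p) := by
  have hconst : ConvexOn ℝ (Ioo (1:ℝ) 2) (fun _ : ℝ => Real.log (4*π^2)) :=
    convexOn_const _ (convex_Ioo 1 2)
  have hG := (hconst.add (convexB.add convexC)).add convexH
  exact (convexOn_exp_comp hG).congr'' (fun p hp => F_eq hp)

lemma convex_lt_of_between {f : ℝ → ℝ} (hf : ConvexOn ℝ (Ioo (1:ℝ) 2) f) {a b c C : ℝ}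
    (ha : a ∈ Ioo (1:ℝ) 2) (hc : c ∈ Ioo (1:ℝ) 2) (hab : a < b) (hbc : b < c)
    (hfa : f a ≤ C) (hfc : f c < C) : f b < C := by
  have hca : 0 < c - a := by linarith
  have hw1 : 0 < (c-b)/(c-a) := div_pos (by linarith) hca
  have hw2 : 0 < (b-a)/(c-a) := div_pos (by linarith) hca
  have hsum : (c-b)/(c-a) + (b-a)/(c-a) = 1 := by field_simp; ring
  have hcomb : ((c-b)/(c-a)) • a + ((b-a)/(c-a)) • c = b := by
    simp only [smul_eq_mul]; field_simp; ring
  have h := hf.2 ha hc hw1.le hw2.le hsum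
  rw [hcomb] at h
  simp only [smul_eq_mul] at h
  have hC : (c-b)/(c-a)*C + (b-a)/(c-a)*C = C := by rw [← add_mul, hsum, one_mul]
  nlinarith [mul_le_mul_of_nonneg_left hfa hw1.le, (mul_lt_mul_iff_right₀ hw2).2 hfc]

lemma pipc_43 : pipc (4/3 : ℝ) ^ 2 = 9 * π^2 / 2 := by
  have hsin : Real.sin (π / (4/3:ℝ)) = Real.sqrt 2 / 2 := by
    rw [show π / (4/3:ℝ) = π - π/4 by ring, Real.sin_pi_sub, Real.sin_pi_div_four]
  have hsq : Real.sqrt 2 ^ 2 = 2 := Real.sq_sqrt (by norm_num)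
  have hs0 : (0:ℝ) < Real.sqrt 2 := by positivity
  unfold pipc
  rw [hsin, div_pow]
  rw [show ((4/3:ℝ) * (Real.sqrt 2/2))^2 = (4/3)^2 * (Real.sqrt 2^2) / 4 by ring, hsq]
  field_simp
  ring

lemma cp_43 : cp (4/3 : ℝ) = (1/3:ℝ)^((1/4):ℝ) * (2/3:ℝ)^((1/2):ℝ) := by
  unfold cp; norm_num

lemma pipc_32 : pipc (3/2 : ℝ) ^ 2 = 64 * π^2 / 27 := by
  have hsin : Real.sin (π / (3/2:ℝ)) = Real.sqrt 3 / 2 := by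
    rw [show π / (3/2:ℝ) = π - π/3 by ring, Real.sin_pi_sub, Real.sin_pi_div_three]
  have hsq : Real.sqrt 3 ^ 2 = 3 := Real.sq_sqrt (by norm_num)
  have hs0 : (0:ℝ) < Real.sqrt 3 := by positivity
  unfold pipc
  rw [hsin, div_pow]
  rw [show ((3/2:ℝ) * (Real.sqrt 3/2))^2 = (3/2)^2 * (Real.sqrt 3^2) / 4 by ring, hsq]
  field_simp
  ring

lemma cp_32 : cp (3/2 : ℝ) = (1/2:ℝ)^((1/3):ℝ) * (1/2:ℝ)^((1/3):ℝ) := by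
  unfold cp; norm_num

lemma bnd1 : (3/4:ℝ) ≤ (1/3:ℝ)^((1/4):ℝ) := by
  have hx : ((1/3:ℝ)^((1/4):ℝ))^(4:ℕ) = 1/3 := by
    rw [← Real.rpow_natCast ((1/3:ℝ)^((1/4):ℝ)) 4, ← Real.rpow_mul (by norm_num)]
    norm_num
  apply le_of_pow_le_pow_left₀ (n := 4) (by norm_num) (Real.rpow_nonneg (by norm_num) _)
  rw [hx]; norm_num

lemma bnd2 : (4/5:ℝ) ≤ (2/3:ℝ)^((1/2):ℝ) := by
  have hx : ((2/3:ℝ)^((1/2):ℝ))^(2:ℕ) = 2/3 := by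
    rw [← Real.rpow_natCast ((2/3:ℝ)^((1/2):ℝ)) 2, ← Real.rpow_mul (by norm_num)]
    norm_num
  apply le_of_pow_le_pow_left₀ (n := 2) (by norm_num) (Real.rpow_nonneg (by norm_num) _)
  rw [hx]; norm_num

lemma bnd3 : (1/2:ℝ)^((1/3):ℝ) ≤ 794/1000 := by
  have hx : ((1/2:ℝ)^((1/3):ℝ))^(3:ℕ) = 1/2 := by
    rw [← Real.rpow_natCast ((1/2:ℝ)^((1/3):ℝ)) 3, ← Real.rpow_mul (by norm_num)]
    norm_num
  apply le_of_pow_le_pow_left₀ (n := 3) (by norm_num) (by norm_num)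
  rw [hx]; norm_num

lemma h8pos : (0:ℝ) < π^2 - 8 := by nlinarith [Real.pi_gt_d6]

lemma F43_gt : π^3/(π^2-8) < pipc (4/3:ℝ)^2 * cp (4/3:ℝ) := by
  rw [pipc_43, cp_43]
  have hx := bnd1
  have hy := bnd2
  have hl := Real.pi_gt_d6
  have hu := Real.pi_lt_d6
  have hxy : (3/5:ℝ) ≤ (1/3:ℝ)^((1/4):ℝ) * (2/3:ℝ)^((1/2):ℝ) := by nlinarith
  rw [div_lt_iff₀ h8pos]
  nlinarith [mul_nonneg (by nlinarith : (0:ℝ) ≤ (1/3:ℝ)^((1/4):ℝ) * (2/3:ℝ)^((1/2):ℝ) - 3/5)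
      (mul_nonneg (sq_nonneg π) h8pos.le), sq_nonneg π, h8pos]

lemma F32_lt : pipc (3/2:ℝ)^2 * cp (3/2:ℝ) < π^3/(π^2-8) := by
  rw [pipc_32, cp_32]
  have hw := bnd3
  have hw0 : (0:ℝ) ≤ (1/2:ℝ)^((1/3):ℝ) := Real.rpow_nonneg (by norm_num) _
  have hl := Real.pi_gt_d6
  have hu := Real.pi_lt_d6
  have hww : (1/2:ℝ)^((1/3):ℝ) * (1/2:ℝ)^((1/3):ℝ) ≤ 630436/1000000 := by nlinarith
  have hww0 : (0:ℝ) ≤ (1/2:ℝ)^((1/3):ℝ) * (1/2:ℝ)^((1/3):ℝ) := by positivity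
  have b1 : π^2 ≤ 98697/10000 := by nlinarith
  have b2 : π^2 - 8 ≤ 18697/10000 := by nlinarith
  have h3l : (31006:ℝ)/1000 < π^3 := by nlinarith
  rw [lt_div_iff₀ h8pos]
  calc 64*π^2/27 * ((1/2:ℝ)^((1/3):ℝ) * (1/2:ℝ)^((1/3):ℝ)) * (π^2-8)
      ≤ 64*(98697/10000)/27 * (630436/1000000) * (18697/10000) := by
        gcongr <;> first | positivity | nlinarith
    _ < 31006/1000 := by norm_num
    _ < π^3 := h3l

lemma cp_le_one {q : ℝ} (hq : q ∈ Ioo (1:ℝ) 2) : cp q ≤ 1 := by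
  obtain ⟨h1, h2⟩ := hq
  have hq0 : 0 < q := by linarith
  unfold cp
  apply mul_le_one₀
  · exact Real.rpow_le_one (by linarith) (by linarith) (div_nonneg (by linarith) hq0.le)
  · exact Real.rpow_nonneg (by linarith) _
  · exact Real.rpow_le_one (by linarith) (by linarith) (div_nonneg (by linarith) hq0.le)

lemma pi_sq_lt : π^2 < π^3/(π^2-8) := by
  rw [lt_div_iff₀ h8pos]
  have b : π^2 - 8 < π := by nlinarith [Real.pi_gt_d6, Real.pi_lt_d6]
  nlinarith [mul_lt_mul_of_pos_left b (by positivity : (0:ℝ) < π^2)]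

lemma tendsto_pipc_sq : Filter.Tendsto (fun q : ℝ => pipc q ^ 2) (𝓝[<] (2:ℝ)) (𝓝 (π^2)) := by
  have h1 : ContinuousAt (fun q : ℝ => q * Real.sin (π/q)) 2 := by
    apply ContinuousAt.mul continuousAt_id
    exact Real.continuous_sin.continuousAt.comp
      (continuousAt_const.div continuousAt_id (by norm_num))
  have h2 : (2:ℝ) * Real.sin (π/2) ≠ 0 := by
    rw [Real.sin_pi_div_two]; norm_num
  have hc : ContinuousAt (fun q : ℝ => pipc q ^ 2) 2 := by
    unfold pipc
    exact (continuousAt_const.div h1 h2).pow 2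
  have hval : pipc 2 ^ 2 = π^2 := by
    unfold pipc
    rw [Real.sin_pi_div_two]
    field_simp
  have := (hc.continuousWithinAt (s := Iio (2:ℝ))).tendsto
  rwa [hval] at this

lemma exists_small {p : ℝ} (hp1 : 1 < p) (hp2 : p < 2) :
    ∃ q ∈ Ioo p 2, pipc q ^ 2 * cp q < π^3/(π^2-8) := by
  have hev1 : ∀ᶠ q in 𝓝[<] (2:ℝ), pipc q ^ 2 < π^3/(π^2-8) :=
    tendsto_pipc_sq.eventually_lt_const pi_sq_lt
  have hev2 : ∀ᶠ q in 𝓝[<] (2:ℝ), q ∈ Ioo p 2 :=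
    Ioo_mem_nhdsLT_of_mem ⟨hp2, le_refl 2⟩
  obtain ⟨q, hq1, hq2⟩ := (hev1.and hev2).exists
  refine ⟨q, hq2, lt_of_le_of_lt ?_ hq1⟩
  have hqIoo : q ∈ Ioo (1:ℝ) 2 := ⟨by linarith [hq2.1], hq2.2⟩
  calc pipc q ^ 2 * cp q ≤ pipc q ^ 2 * 1 :=
        mul_le_mul_of_nonneg_left (cp_le_one hqIoo) (sq_nonneg _)
    _ = pipc q ^ 2 := mul_one _

lemma exists_root : ∃ p₀ ∈ Ioo (4/3:ℝ) (3/2),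
    pipc p₀ ^ 2 * cp p₀ = π^3/(π^2-8) := by
  have hsub : Icc (4/3:ℝ) (3/2) ⊆ Ioo (1:ℝ) 2 := by
    intro x hx; exact ⟨by linarith [hx.1], by linarith [hx.2]⟩
  have hcont := (convexF.continuousOn isOpen_Ioo).mono hsub
  have hIVT := intermediate_value_Icc' (by norm_num : (4/3:ℝ) ≤ 3/2) hcont
  have hmem : π^3/(π^2-8) ∈ Icc (pipc (3/2:ℝ)^2 * cp (3/2:ℝ)) (pipc (4/3:ℝ)^2 * cp (4/3:ℝ)) :=
    ⟨F32_lt.le, F43_gt.le⟩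
  obtain ⟨p₀, hp₀, hval⟩ := hIVT hmem
  refine ⟨p₀, ⟨?_, ?_⟩, hval⟩
  · exact lt_of_le_of_ne hp₀.1 (by intro h; rw [← h] at hval; exact F43_gt.ne' hval)
  · exact lt_of_le_of_ne hp₀.2 (by intro h; rw [h] at hval; exact F32_lt.ne hval)

theorem convexity_and_threshold :
    ConvexOn ℝ (Ioo (1:ℝ) 2) (fun p => pipc p ^ 2 * cp p) ∧
    (∃! p₀, p₀ ∈ Ioo (4/3 : ℝ) (3/2) ∧ pipc p₀ ^ 2 * cp p₀ = π^3 / (π^2 - 8)) ∧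
    (∀ p₀ ∈ Ioo (4/3 : ℝ) (3/2), pipc p₀ ^ 2 * cp p₀ = π^3 / (π^2 - 8) →
      ∀ p ∈ Ioo p₀ 2, pipc p ^ 2 * cp p < π^3 / (π^2 - 8)) := by
  have h32 : (3/2:ℝ) ∈ Ioo (1:ℝ) 2 := by norm_num
  refine ⟨convexF, ?_, ?_⟩
  · obtain ⟨p₀, hp₀, hval⟩ := exists_root
    refine ⟨p₀, ⟨hp₀, hval⟩, ?_⟩
    rintro y ⟨hy, hyval⟩
    by_contra hne
    have hyIoo : y ∈ Ioo (1:ℝ) 2 := ⟨by linarith [hy.1], by linarith [hy.2]⟩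
    have hpIoo : p₀ ∈ Ioo (1:ℝ) 2 := ⟨by linarith [hp₀.1], by linarith [hp₀.2]⟩
    rcases lt_or_gt_of_ne hne with h | h
    · have := convex_lt_of_between convexF hyIoo h32 h hp₀.2 hyval.le F32_lt
      exact absurd hval this.ne
    · have := convex_lt_of_between convexF hpIoo h32 h hy.2 hval.le F32_lt
      exact absurd hyval this.ne
  · rintro p₀ hp₀ hval p ⟨hp1, hp2⟩
    have hpIoo : p₀ ∈ Ioo (1:ℝ) 2 := ⟨by linarith [hp₀.1], by linarith [hp₀.2]⟩
    obtain ⟨q, hq, hqval⟩ := exists_small (by linarith [hp₀.1] : (1:ℝ) < p) hp2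
    have hqIoo : q ∈ Ioo (1:ℝ) 2 := ⟨by linarith [hq.1, hp₀.1], hq.2⟩
    exact convex_lt_of_between convexF hpIoo hqIoo hp1 hq.1 hval.le hqval
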